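/- Let h be an m×n ROCN matrix (m ≤ n). For all Hermitian operators A_1,…,A_m on a finite-dimensional complex Hilbert space H_A and B_1,…,B_n on a finite-dimensional complex Hilbert space H_B with A_i² = 1 and B_j² = 1, and every unit vector ψ ∈ H_A ⊗ H_B, one has ⟨ψ| Σ_{i=1}^m Σ_{j=1}^n h_{ij} (A_i ⊗ B_j) |ψ⟩ ≤ n. (Upper bound part of Proposition 1: the quantum value of the ROCN Bell functional is at most n.) -/
import Mathlib

open Matrix Kronecker Finset

/-- An `m × n` real matrix `h` (with `m ≤ n`) is ROCN (row-orthogonal, column-normalized)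
if all its rows are nonzero, its rows are pairwise orthogonal, and every column has
unit Euclidean norm. -/
def IsROCN {m n : ℕ} (h : Matrix (Fin m) (Fin n) ℝ) : Prop :=
  m ≤ n ∧
  (∀ i, ∃ j, h i j ≠ 0) ∧
  (∀ i k, i ≠ k → ∑ j, h i j * h k j = 0) ∧
  (∀ j, ∑ i, (h i j) ^ 2 = 1)

section aux

variable {l m n p : Type*}

lemma sum_kronecker' {ι : Type*} (s : Finset ι) (f : ι → Matrix l m ℂ) (B : Matrix n p ℂ) :
    (∑ i ∈ s, f i) ⊗ₖ B = ∑ i ∈ s, (f i) ⊗ₖ B := by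
  ext ⟨a, b⟩ ⟨c, d⟩
  simp [Matrix.kroneckerMap_apply, Matrix.sum_apply, Finset.sum_mul]

lemma conjTranspose_kronecker' (A : Matrix l m ℂ) (B : Matrix n p ℂ) :
    (A ⊗ₖ B)ᴴ = Aᴴ ⊗ₖ Bᴴ := by
  ext ⟨a, b⟩ ⟨c, d⟩
  simp [Matrix.conjTranspose_apply, Matrix.kroneckerMap_apply, mul_comm]

lemma dot_mulVec_sum {ι κ : Type*} [Fintype κ] (s : Finset ι) (ψ : κ → ℂ)
    (M : ι → Matrix κ κ ℂ) :
    star ψ ⬝ᵥ (∑ j ∈ s, M j).mulVec ψ = ∑ j ∈ s, star ψ ⬝ᵥ (M j).mulVec ψ := by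
  classical
  induction s using Finset.cons_induction with
  | empty => simp
  | cons a s ha ih => simp [Finset.sum_insert ha, Matrix.add_mulVec, dotProduct_add, ih]

lemma dotProduct_star_self_re_nonneg {ι : Type*} [Fintype ι] (w : ι → ℂ) :
    0 ≤ (star w ⬝ᵥ w).re := by
  simp only [dotProduct, Pi.star_apply, Complex.re_sum]
  refine Finset.sum_nonneg fun i _ => ?_
  rw [show (star (w i) * w i) = Complex.normSq (w i) from Complex.normSq_eq_conj_mul_self.symm]
  exact Complex.normSq_nonneg _

lemma re_star_dotProduct_comm {ι : Type*} [Fintype ι] (u v : ι → ℂ) :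
    (star v ⬝ᵥ u).re = (star u ⬝ᵥ v).re := by
  rw [Matrix.star_dotProduct]
  simp

/-- Cauchy–Schwarz-style AM-GM bound for Hermitian matrices. -/
lemma herm_amgm {ι : Type*} [Fintype ι] [DecidableEq ι] (X Y : Matrix ι ι ℂ)
    (hX : Xᴴ = X) (hY : Yᴴ = Y) (ψ : ι → ℂ) :
    2 * (star ψ ⬝ᵥ (X * Y).mulVec ψ).re ≤
      (star ψ ⬝ᵥ (X * X).mulVec ψ).re + (star ψ ⬝ᵥ (Y * Y).mulVec ψ).re := by
  set u := X.mulVec ψ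
  set v := Y.mulVec ψ
  have key : ∀ Z W : Matrix ι ι ℂ, Zᴴ = Z →
      star ψ ⬝ᵥ (Z * W).mulVec ψ = star (Z.mulVec ψ) ⬝ᵥ (W.mulVec ψ) := by
    intro Z W hZ
    rw [← Matrix.mulVec_mulVec, Matrix.star_mulVec, hZ,
      ← Matrix.dotProduct_mulVec]
  rw [key X Y hX, key X X hX, key Y Y hY]
  have h0 := dotProduct_star_self_re_nonneg (u - v)
  have hexp : star (u - v) ⬝ᵥ (u - v)
      = star u ⬝ᵥ u - star u ⬝ᵥ v - star v ⬝ᵥ u + star v ⬝ᵥ v := by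
    simp only [star_sub, sub_dotProduct, dotProduct_sub]
    ring
  rw [hexp] at h0
  simp only [Complex.add_re, Complex.sub_re] at h0
  have := re_star_dotProduct_comm u v
  linarith

end aux

/-- For an ROCN matrix `h`, Hermitian involutions `A i` and `B j`, and
any unit vector `ψ`, we have `⟨ψ| Σᵢⱼ hᵢⱼ (Aᵢ ⊗ Bⱼ) |ψ⟩ ≤ n` (upper bound on the quantum
value of the ROCN Bell functional). -/
theorem rocn_quantum_bound {m n dA dB : ℕ}
    (h : Matrix (Fin m) (Fin n) ℝ) (hROCN : IsROCN h)
    (A : Fin m → Matrix (Fin dA) (Fin dA) ℂ)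
    (B : Fin n → Matrix (Fin dB) (Fin dB) ℂ)
    (hAH : ∀ i, (A i)ᴴ = A i) (hBH : ∀ j, (B j)ᴴ = B j)
    (hA2 : ∀ i, A i * A i = 1) (hB2 : ∀ j, B j * B j = 1)
    (ψ : Fin dA × Fin dB → ℂ) (hψ : star ψ ⬝ᵥ ψ = 1) :
    (star ψ ⬝ᵥ (∑ i, ∑ j, (h i j : ℂ) • (A i ⊗ₖ B j)).mulVec ψ).re ≤ n := by
  obtain ⟨hmn, -, horth, hcol⟩ := hROCN
  set C : Fin n → Matrix (Fin dA) (Fin dA) ℂ := fun j => ∑ i, (h i j : ℂ) • A i with hC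
  -- Hermiticity of C j
  have hCH : ∀ j, (C j)ᴴ = C j := by
    intro j
    simp only [hC, Matrix.conjTranspose_sum, Matrix.conjTranspose_smul]
    refine Finset.sum_congr rfl fun i _ => ?_
    rw [hAH i, Complex.star_def, Complex.conj_ofReal]
  -- rewrite the Bell operator
  have hop : (∑ i, ∑ j, (h i j : ℂ) • (A i ⊗ₖ B j)) = ∑ j, (C j) ⊗ₖ (B j) := by
    rw [Finset.sum_comm]
    refine Finset.sum_congr rfl fun j _ => ?_
    rw [hC, sum_kronecker']
    exact Finset.sum_congr rfl fun i _ => (Matrix.smul_kronecker _ _ _).symm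
  -- sum of squares identity
  have hCsq : (∑ j, C j * C j) = (n : ℂ) • (1 : Matrix (Fin dA) (Fin dA) ℂ) := by
    have expand : ∀ j, C j * C j = ∑ i, ∑ k, ((h i j : ℂ) * (h k j : ℂ)) • (A i * A k) := by
      intro j
      rw [hC, Finset.sum_mul_sum]
      refine Finset.sum_congr rfl fun i _ => Finset.sum_congr rfl fun k _ => ?_
      rw [smul_mul_smul_comm]
    calc (∑ j, C j * C j) = ∑ i, ∑ k, (((∑ j, h i j * h k j : ℝ)) : ℂ) • (A i * A k) := by
          simp only [expand]
          rw [Finset.sum_comm]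
          refine Finset.sum_congr rfl fun i _ => ?_
          rw [Finset.sum_comm]
          refine Finset.sum_congr rfl fun k _ => ?_
          rw [← Finset.sum_smul]
          push_cast
          rfl
      _ = ∑ i, ((∑ j, h i j ^ 2 : ℝ) : ℂ) • (1 : Matrix (Fin dA) (Fin dA) ℂ) := by
          refine Finset.sum_congr rfl fun i _ => ?_
          rw [Finset.sum_eq_single i]
          · rw [hA2 i]
            congr 1
            push_cast
            exact Finset.sum_congr rfl fun j _ => (sq (h i j : ℂ)).symm
          · intro k _ hk
            rw [horth i k (Ne.symm hk), Complex.ofReal_zero, zero_smul]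
          · intro hi; exact absurd (Finset.mem_univ i) hi
      _ = (n : ℂ) • (1 : Matrix (Fin dA) (Fin dA) ℂ) := by
          rw [← Finset.sum_smul]
          congr 1
          rw [← Complex.ofReal_sum, Finset.sum_comm]
          simp [hcol]
  -- now the main estimate
  rw [hop]
  have key : ∀ j, 2 * (star ψ ⬝ᵥ ((C j) ⊗ₖ (B j)).mulVec ψ).re ≤
      (star ψ ⬝ᵥ (((C j * C j) ⊗ₖ (1 : Matrix (Fin dB) (Fin dB) ℂ))).mulVec ψ).re + 1 := by
    intro j
    have hXY : (C j) ⊗ₖ (B j) = ((C j) ⊗ₖ (1 : Matrix (Fin dB) (Fin dB) ℂ)) *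
        ((1 : Matrix (Fin dA) (Fin dA) ℂ) ⊗ₖ (B j)) := by
      rw [← Matrix.mul_kronecker_mul, mul_one, one_mul]
    have hXX : ((C j) ⊗ₖ (1 : Matrix (Fin dB) (Fin dB) ℂ)) *
        ((C j) ⊗ₖ (1 : Matrix (Fin dB) (Fin dB) ℂ)) = (C j * C j) ⊗ₖ 1 := by
      rw [← Matrix.mul_kronecker_mul, mul_one]
    have hYY : ((1 : Matrix (Fin dA) (Fin dA) ℂ) ⊗ₖ (B j)) *
        ((1 : Matrix (Fin dA) (Fin dA) ℂ) ⊗ₖ (B j)) = 1 := by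
      rw [← Matrix.mul_kronecker_mul, one_mul, hB2, Matrix.one_kronecker_one]
    have hXH : (((C j) ⊗ₖ (1 : Matrix (Fin dB) (Fin dB) ℂ)))ᴴ = (C j) ⊗ₖ 1 := by
      rw [conjTranspose_kronecker', hCH, Matrix.conjTranspose_one]
    have hYH : (((1 : Matrix (Fin dA) (Fin dA) ℂ)) ⊗ₖ (B j))ᴴ = 1 ⊗ₖ (B j) := by
      rw [conjTranspose_kronecker', hBH, Matrix.conjTranspose_one]
    have := herm_amgm _ _ hXH hYH ψ
    rw [← hXY] at this
    rw [hXX] at this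
    rw [hYY, Matrix.one_mulVec, hψ] at this
    simpa using this
  -- sum the key inequality
  have hsum2 : ∑ j, (star ψ ⬝ᵥ (((C j * C j) ⊗ₖ (1 : Matrix (Fin dB) (Fin dB) ℂ))).mulVec ψ).re
      = (n : ℝ) := by
    rw [← Complex.re_sum]
    have : ∑ j, star ψ ⬝ᵥ (((C j * C j) ⊗ₖ (1 : Matrix (Fin dB) (Fin dB) ℂ))).mulVec ψ
        = star ψ ⬝ᵥ ((∑ j, (C j * C j) ⊗ₖ (1 : Matrix (Fin dB) (Fin dB) ℂ)).mulVec ψ) := by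
      rw [dot_mulVec_sum]
    rw [this, ← sum_kronecker', hCsq, Matrix.smul_kronecker, Matrix.one_kronecker_one,
      Matrix.smul_mulVec, Matrix.one_mulVec, dotProduct_smul, smul_eq_mul, hψ,
      mul_one]
    simp
  have hlhs : (star ψ ⬝ᵥ (∑ j, (C j) ⊗ₖ (B j)).mulVec ψ).re
      = ∑ j, (star ψ ⬝ᵥ ((C j) ⊗ₖ (B j)).mulVec ψ).re := by
    rw [dot_mulVec_sum, Complex.re_sum]
  rw [hlhs]
  have := Finset.sum_le_sum (fun j (_ : j ∈ Finset.univ) => key j)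
  simp only [Finset.sum_add_distrib, Finset.sum_const, Finset.card_univ, Fintype.card_fin,
    nsmul_eq_mul, mul_one] at this
  rw [← Finset.mul_sum] at this
  rw [hsum2] at this
  linarith
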